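/- Let M be a unital C*-algebra, N ⊆ M a unital C*-subalgebra, E : M → N a conditional expectation, and φ a state on M with φ∘E = φ. If (u_n) is a sequence of unitaries in M which is Cauchy with respect to the modular norm ‖·‖_E, then the sequence of states φ∘Ad(u_n*) (where (φ∘Ad(u_n*))(x) = φ(u_n* x u_n)) is Cauchy in the dual norm of M*, and hence converges in norm to a state ψ on M. -/

import Mathlib

open scoped ComplexOrder
open Filter

/-- The continuous linear map `x ↦ u* x u` implementing `Ad (u*)` on states. -/
noncomputable def conjCLM {M : Type*} [CStarAlgebra M] (u : M) : M →L[ℂ] M :=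
  (ContinuousLinearMap.mul ℂ M (star u)).comp ((ContinuousLinearMap.mul ℂ M).flip u)

section helpers

variable {M : Type*} [CStarAlgebra M] [PartialOrder M] [StarOrderedRing M]

lemma state_conj_symm' (φ : M →L[ℂ] ℂ)
    (hφpos : ∀ x : M, 0 ≤ φ (star x * x)) (a b : M) :
    (starRingEnd ℂ) (φ (star b * a)) = φ (star a * b) := by
  have him : ∀ z : M, (φ (star z * z)).im = 0 := fun z =>
    ((Complex.nonneg_iff.mp (hφpos z)).2).symm
  have h1 := him (a + b)
  have h2 := him (a + Complex.I • b)
  simp only [star_add, add_mul, mul_add, map_add, Complex.add_im, star_smul,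
    Complex.star_def, Complex.conj_I, smul_mul_assoc, mul_smul_comm, map_smul,
    smul_smul, neg_mul, Complex.I_mul_I, neg_neg, one_smul, smul_eq_mul,
    Complex.mul_im, Complex.mul_re, Complex.I_re, Complex.I_im, Complex.neg_im, Complex.neg_re,
    neg_smul, map_neg, him a, him b] at h1 h2
  apply Complex.ext <;>
    simp only [Complex.conj_re, Complex.conj_im] <;> linarith

lemma state_cs' (φ : M →L[ℂ] ℂ)
    (hφpos : ∀ x : M, 0 ≤ φ (star x * x)) (a b : M) :
    ‖φ (star a * b)‖ ≤ Real.sqrt (φ (star a * a)).re * Real.sqrt (φ (star b * b)).re := by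
  letI core : PreInnerProductSpace.Core ℂ M :=
    { inner := fun x y => φ (star x * y)
      conj_inner_symm := fun x y => state_conj_symm' φ hφpos x y
      re_inner_nonneg := fun x => (Complex.nonneg_iff.mp (hφpos x)).1
      add_left := fun x y z => by simp [star_add, add_mul]
      smul_left := fun x y r => by
        simp [star_smul, smul_mul_assoc, Complex.star_def, smul_eq_mul] }
  have h := @InnerProductSpace.Core.inner_mul_inner_self_le ℂ M _ _ _ core a b
  have hsym : ‖φ (star b * a)‖ = ‖φ (star a * b)‖ := by
    rw [← state_conj_symm' φ hφpos a b]; exact (RCLike.norm_conj _).symm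
  have h' : ‖φ (star a * b)‖ * ‖φ (star a * b)‖ ≤
      (φ (star a * a)).re * (φ (star b * b)).re := by
    calc ‖φ (star a * b)‖ * ‖φ (star a * b)‖
        = ‖φ (star a * b)‖ * ‖φ (star b * a)‖ := by rw [hsym]
      _ ≤ _ := h
  calc ‖φ (star a * b)‖ = Real.sqrt (‖φ (star a * b)‖ * ‖φ (star a * b)‖) :=
        (Real.sqrt_mul_self (norm_nonneg _)).symm
    _ ≤ Real.sqrt ((φ (star a * a)).re * (φ (star b * b)).re) := Real.sqrt_le_sqrt h'
    _ = _ := Real.sqrt_mul (Complex.nonneg_iff.mp (hφpos a)).1 _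

lemma state_nonneg (φ : M →L[ℂ] ℂ)
    (hφpos : ∀ x : M, 0 ≤ φ (star x * x)) {z : M} (hz : 0 ≤ z) : 0 ≤ φ z := by
  have h1 : star (CFC.sqrt z) * CFC.sqrt z = z := by
    rw [(IsSelfAdjoint.of_nonneg (CFC.sqrt_nonneg z)).star_eq]
    exact CFC.sqrt_mul_sqrt_self z hz
  simpa [h1] using hφpos (CFC.sqrt z)

lemma state_conj_nonneg (φ : M →L[ℂ] ℂ)
    (hφpos : ∀ x : M, 0 ≤ φ (star x * x)) (c : M) {z : M} (hz : 0 ≤ z) :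
    0 ≤ φ (star c * z * c) := by
  have h1 : star (CFC.sqrt z * c) * (CFC.sqrt z * c) = star c * z * c := by
    rw [star_mul, (IsSelfAdjoint.of_nonneg (CFC.sqrt_nonneg z)).star_eq, mul_assoc,
      ← mul_assoc (CFC.sqrt z), CFC.sqrt_mul_sqrt_self z hz, ← mul_assoc]
  have h2 := hφpos (CFC.sqrt z * c)
  rwa [h1] at h2

lemma state_mono (φ : M →L[ℂ] ℂ)
    (hφpos : ∀ x : M, 0 ≤ φ (star x * x)) {z w : M} (h : z ≤ w) :
    (φ z).re ≤ (φ w).re := by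
  have h0 := state_nonneg φ hφpos (sub_nonneg.mpr h)
  rw [map_sub] at h0
  have := (Complex.nonneg_iff.mp h0).1
  rw [Complex.sub_re] at this
  linarith

lemma halgmap (r : ℝ) : algebraMap ℝ M r = (r : ℂ) • (1 : M) := by
  rw [IsScalarTower.algebraMap_apply ℝ ℂ M, Algebra.algebraMap_eq_smul_one]
  rfl

lemma state_le_norm (φ : M →L[ℂ] ℂ) (hφ1 : φ 1 = 1)
    (hφpos : ∀ x : M, 0 ≤ φ (star x * x)) {z : M} (hz : 0 ≤ z) :
    (φ z).re ≤ ‖z‖ := by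
  have h1 : z ≤ algebraMap ℝ M ‖z‖ :=
    IsSelfAdjoint.le_algebraMap_norm_self (IsSelfAdjoint.of_nonneg hz)
  have h2 := state_mono φ hφpos h1
  rwa [halgmap, map_smul, smul_eq_mul, hφ1, mul_one, Complex.ofReal_re] at h2

/-- `re φ(star (x c) * (x c)) ≤ ‖x‖ ^ 2 * re φ(star c * c)`. -/
lemma state_conj_bound (φ : M →L[ℂ] ℂ)
    (hφpos : ∀ x : M, 0 ≤ φ (star x * x)) (x c : M) :
    (φ (star (x * c) * (x * c))).re ≤ ‖x‖ ^ 2 * (φ (star c * c)).re := by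
  have h1 : star x * x ≤ algebraMap ℝ M (‖x‖ ^ 2) := by
    have := IsSelfAdjoint.le_algebraMap_norm_self (IsSelfAdjoint.star_mul_self x)
    rwa [CStarRing.norm_star_mul_self, ← pow_two] at this
  have h3 := state_conj_nonneg φ hφpos c (sub_nonneg.mpr h1)
  have h4 : star c * (algebraMap ℝ M (‖x‖ ^ 2) - star x * x) * c =
      ((‖x‖ ^ 2 : ℝ) : ℂ) • (star c * c) - star (x * c) * (x * c) := by
    rw [halgmap, star_mul]
    simp only [mul_sub, sub_mul, smul_mul_assoc, mul_smul_comm, mul_one]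
    noncomm_ring
  rw [h4, map_sub, map_smul] at h3
  have h5 := (Complex.nonneg_iff.mp h3).1
  rw [Complex.sub_re, smul_eq_mul, Complex.re_ofReal_mul] at h5
  linarith

end helpers

theorem stmt19 {M : Type*} [CStarAlgebra M] [PartialOrder M] [StarOrderedRing M]
    -- `N` is a unital C*-subalgebra of `M`
    (N : StarSubalgebra ℂ M) (hNclosed : IsClosed (N : Set M))
    -- `E` is a conditional expectation onto `N`
    (E : M →ₗ[ℂ] M) (hErange : ∀ x : M, E x ∈ N) (hEid : ∀ b ∈ N, E b = b)
    (hEpos : ∀ x : M, 0 ≤ x → 0 ≤ E x)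
    (hEbimod : ∀ x : M, ∀ b ∈ N, ∀ c ∈ N, E (b * x * c) = b * E x * c)
    -- `φ` is a state on `M` with `φ ∘ E = φ`
    (φ : M →L[ℂ] ℂ) (hφ1 : φ 1 = 1) (hφpos : ∀ x : M, 0 ≤ φ (star x * x))
    (hφE : ∀ x : M, φ (E x) = φ x)
    -- a sequence of unitaries, Cauchy for the modular norm `‖·‖_E`
    (u : ℕ → M) (hu : ∀ n, u n ∈ unitary M)
    (hcauchy : ∀ ε : ℝ, 0 < ε → ∃ K : ℕ, ∀ m ≥ K, ∀ n ≥ K,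
      Real.sqrt ‖E (star (u m - u n) * (u m - u n))‖ < ε) :
    -- the states `φ ∘ Ad (u n)*` form a Cauchy sequence in `M*`,
    -- converging in norm to a state `ψ`
    CauchySeq (fun n => φ.comp (conjCLM (u n))) ∧
    ∃ ψ : M →L[ℂ] ℂ, ψ 1 = 1 ∧ (∀ x : M, 0 ≤ ψ (star x * x)) ∧
      Tendsto (fun n => φ.comp (conjCLM (u n))) atTop (nhds ψ) := by
  set f : ℕ → M →L[ℂ] ℂ := fun n => φ.comp (conjCLM (u n)) with hf
  -- the key norm estimate
  have hbound : ∀ m n : ℕ, ‖f m - f n‖ ≤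
      2 * Real.sqrt ‖E (star (u m - u n) * (u m - u n))‖ := by
    intro m n
    set a := u m
    set b := u n
    set d := a - b with hd
    have hsqnn : (0:ℝ) ≤ Real.sqrt ‖E (star d * d)‖ := Real.sqrt_nonneg _
    refine ContinuousLinearMap.opNorm_le_bound _ (by positivity) fun x => ?_
    have hdd : (φ (star d * d)).re ≤ ‖E (star d * d)‖ := by
      rw [← hφE (star d * d)]
      exact state_le_norm φ hφ1 hφpos (hEpos _ (star_mul_self_nonneg d))
    have haa : star a * a = 1 := (Unitary.mem_iff.mp (hu m)).1
    have hbb : star b * b = 1 := (Unitary.mem_iff.mp (hu n)).1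
    have hsplit : (f m - f n) x = φ (star d * (x * a)) + φ (star b * (x * d)) := by
      simp only [hf, ContinuousLinearMap.sub_apply, ContinuousLinearMap.comp_apply,
        conjCLM, ContinuousLinearMap.mul_apply', ContinuousLinearMap.flip_apply, hd,
        star_sub, sub_mul, mul_sub, map_sub, map_add]
      ring
    have hsqrtdd : Real.sqrt (φ (star d * d)).re ≤ Real.sqrt ‖E (star d * d)‖ :=
      Real.sqrt_le_sqrt hdd
    have t1 : ‖φ (star d * (x * a))‖ ≤ Real.sqrt ‖E (star d * d)‖ * ‖x‖ := by
      calc ‖φ (star d * (x * a))‖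
          ≤ Real.sqrt (φ (star d * d)).re * Real.sqrt (φ (star (x * a) * (x * a))).re :=
            state_cs' φ hφpos d (x * a)
        _ ≤ Real.sqrt ‖E (star d * d)‖ * Real.sqrt (‖x‖ ^ 2 * (φ (star a * a)).re) := by
            refine mul_le_mul hsqrtdd (Real.sqrt_le_sqrt (state_conj_bound φ hφpos x a))
              (Real.sqrt_nonneg _) hsqnn
        _ = Real.sqrt ‖E (star d * d)‖ * ‖x‖ := by
            rw [haa, hφ1, Complex.one_re, mul_one, Real.sqrt_sq (norm_nonneg x)]
    have t2 : ‖φ (star b * (x * d))‖ ≤ Real.sqrt ‖E (star d * d)‖ * ‖x‖ := by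
      calc ‖φ (star b * (x * d))‖
          ≤ Real.sqrt (φ (star b * b)).re * Real.sqrt (φ (star (x * d) * (x * d))).re :=
            state_cs' φ hφpos b (x * d)
        _ ≤ 1 * Real.sqrt (‖x‖ ^ 2 * (φ (star d * d)).re) := by
            refine mul_le_mul ?_ (Real.sqrt_le_sqrt (state_conj_bound φ hφpos x d))
              (Real.sqrt_nonneg _) (by norm_num)
            rw [hbb, hφ1, Complex.one_re, Real.sqrt_one]
        _ = ‖x‖ * Real.sqrt (φ (star d * d)).re := by
            rw [one_mul, Real.sqrt_mul (sq_nonneg _), Real.sqrt_sq (norm_nonneg x)]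
        _ ≤ ‖x‖ * Real.sqrt ‖E (star d * d)‖ := by
            exact mul_le_mul_of_nonneg_left hsqrtdd (norm_nonneg x)
        _ = Real.sqrt ‖E (star d * d)‖ * ‖x‖ := mul_comm _ _
    calc ‖(f m - f n) x‖ = ‖φ (star d * (x * a)) + φ (star b * (x * d))‖ := by rw [hsplit]
      _ ≤ ‖φ (star d * (x * a))‖ + ‖φ (star b * (x * d))‖ := norm_add_le _ _
      _ ≤ Real.sqrt ‖E (star d * d)‖ * ‖x‖ + Real.sqrt ‖E (star d * d)‖ * ‖x‖ :=
          add_le_add t1 t2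
      _ = 2 * Real.sqrt ‖E (star d * d)‖ * ‖x‖ := by ring
  have hC : CauchySeq f := by
    rw [Metric.cauchySeq_iff]
    intro ε hε
    obtain ⟨K, hK⟩ := hcauchy (ε / 3) (by positivity)
    refine ⟨K, fun m hm n hn => ?_⟩
    have := hbound m n
    have h2 := hK m hm n hn
    rw [dist_eq_norm]
    calc ‖f m - f n‖ ≤ 2 * Real.sqrt ‖E (star (u m - u n) * (u m - u n))‖ := hbound m n
      _ < 2 * (ε / 3) := by linarith
      _ < ε := by linarith
  refine ⟨hC, ?_⟩
  obtain ⟨ψ, hψ⟩ := cauchySeq_tendsto_of_complete hC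
  have heval : ∀ z : M, Tendsto (fun n => (f n) z) atTop (nhds (ψ z)) := fun z =>
    ((ContinuousLinearMap.apply ℂ ℂ z).continuous.tendsto ψ).comp hψ
  have happly : ∀ (n : ℕ) (z : M), (f n) z = φ (star (u n) * (z * u n)) := fun n z => by
    simp only [hf, ContinuousLinearMap.comp_apply, conjCLM,
      ContinuousLinearMap.mul_apply', ContinuousLinearMap.flip_apply]
  refine ⟨ψ, ?_, ?_, hψ⟩
  · -- ψ 1 = 1
    have h1 : ∀ n : ℕ, (f n) (1 : M) = 1 := fun n => by
      rw [happly, one_mul, (Unitary.mem_iff.mp (hu n)).1, hφ1]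
    have := heval 1
    rw [show (fun n => (f n) (1:M)) = fun _ => (1:ℂ) from funext h1] at this
    exact tendsto_nhds_unique this tendsto_const_nhds
  · -- positivity
    intro x
    have hnn : ∀ n : ℕ, 0 ≤ (f n) (star x * x) := fun n => by
      rw [happly]
      have : star (u n) * (star x * x * u n) = star (x * u n) * (x * u n) := by
        rw [star_mul, mul_assoc, mul_assoc]
      rw [← mul_assoc, ← mul_assoc] at this
      rw [show star (u n) * (star x * x * u n) = star (x * u n) * (x * u n) by
        rw [star_mul]; noncomm_ring]
      exact hφpos _
    have h := heval (star x * x)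
    rw [Complex.nonneg_iff]
    constructor
    · refine ge_of_tendsto ((Complex.continuous_re.tendsto _).comp h) ?_
      exact Eventually.of_forall fun n => (Complex.nonneg_iff.mp (hnn n)).1
    · have him : Tendsto (fun n => ((f n) (star x * x)).im) atTop
          (nhds ((ψ (star x * x)).im)) := (Complex.continuous_im.tendsto _).comp h
      have him0 : (fun n => ((f n) (star x * x)).im) = fun _ => (0:ℝ) :=
        funext fun n => ((Complex.nonneg_iff.mp (hnn n)).2).symm
      rw [him0] at him
      exact (tendsto_nhds_unique him tendsto_const_nhds).symm
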